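/- Suppose Σ ∈ P(X) is an irreducible collection of partial splits of X. Then any two split closures of Σ obtained using solely the M-rule θ_M (with (P) holding for all collections) are equal. -/

import Mathlib

/-!
Common definitions: partial splits of a finite set `X`, modelled as unordered
pairs (`Sym2`) of nonempty disjoint subsets of `X`; the `M`-, `Y`- and `Z`-
closure rules; weak compatibility; `X`-cycles and display; split closure
sequences and split closures.
-/

variable {X : Type*}

/-- `S` is a partial split of `X`: an unordered pair of nonempty disjoint subsets of `X`. -/
def IsPartialSplit (S : Sym2 (Set X)) : Prop :=
  ∃ A B : Set X, S = s(A, B) ∧ A.Nonempty ∧ B.Nonempty ∧ Disjoint A B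

/-- `S` is a full split of `X`: a partial split whose two parts cover `X`. -/
def IsFullSplit (S : Sym2 (Set X)) : Prop :=
  ∃ A B : Set X, S = s(A, B) ∧ A.Nonempty ∧ B.Nonempty ∧ Disjoint A B ∧ A ∪ B = Set.univ

/-- The partial split `S` extends the partial split `T`. -/
def SplitExtends (S T : Sym2 (Set X)) : Prop :=
  ∃ A B C D : Set X, S = s(A, B) ∧ T = s(C, D) ∧ C ⊆ A ∧ D ⊆ B

/-- `Sig ⪯ Sig'`: every partial split of `Sig` is extended by one of `Sig'`. -/
def Preceq (Sig Sig' : Set (Sym2 (Set X))) : Prop :=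
  ∀ S ∈ Sig, ∃ T ∈ Sig', SplitExtends T S

/-- `Sig⁻`: the set obtained from `Sig` by removing all redundant partial splits,
i.e. those extended by a different element of `Sig`. -/
def sreduce (Sig : Set (Sym2 (Set X))) : Set (Sym2 (Set X)) :=
  {S | S ∈ Sig ∧ ¬ ∃ T ∈ Sig, T ≠ S ∧ SplitExtends T S}

/-- `Sig ∈ P(X)`: `Sig` is an irreducible collection of partial splits of `X`. -/
def InPX (Sig : Set (Sym2 (Set X))) : Prop :=
  (∀ S ∈ Sig, IsPartialSplit S) ∧ sreduce Sig = Sig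

/-- Two partial splits are compatible if some part of one is disjoint from some part
of the other. -/
def SplitCompatible (S T : Sym2 (Set X)) : Prop :=
  ∃ A B C D : Set X, S = s(A, B) ∧ T = s(C, D) ∧ A ∩ C = ∅

/-- Weak compatibility of a (multi)triple of partial splits: for every choice of parts,
one of the four distinguished triple intersections is empty. -/
def WeaklyCompatTriple (S1 S2 S3 : Sym2 (Set X)) : Prop :=
  ∀ A1 B1 A2 B2 A3 B3 : Set X,
    S1 = s(A1, B1) → S2 = s(A2, B2) → S3 = s(A3, B3) →
    A1 ∩ A2 ∩ A3 = ∅ ∨ B1 ∩ B2 ∩ A3 = ∅ ∨ B1 ∩ A2 ∩ B3 = ∅ ∨ A1 ∩ B2 ∩ B3 = ∅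

/-- A collection of partial splits is weakly compatible if every three of its members are. -/
def WeaklyCompatible (Sig : Set (Sym2 (Set X))) : Prop :=
  ∀ S1 ∈ Sig, ∀ S2 ∈ Sig, ∀ S3 ∈ Sig, WeaklyCompatTriple S1 S2 S3

/-- Condition of the `M`-rule for the parts `A1|B1`, `A2|B2`. -/
def mCond (A1 B1 A2 B2 : Set X) : Prop :=
  (A1 ∩ A2).Nonempty ∧ (B1 ∩ B2).Nonempty

/-- Output of the `M`-rule applied with respect to the parts `A1|B1`, `A2|B2`. -/
def mOut (A1 B1 A2 B2 : Set X) : Set (Sym2 (Set X)) :=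
  {s(A1, B1), s(A2, B2), s(A1 ∩ A2, B1 ∪ B2), s(B1 ∩ B2, A1 ∪ A2)}

/-- Condition of the `Y`-rule for the parts `A1|B1`, `A2|B2`, `A3|B3`. -/
def yCond (A1 B1 A2 B2 A3 B3 : Set X) : Prop :=
  (A1 ∩ A2 ∩ A3).Nonempty ∧ (B1 ∩ B2 ∩ A3).Nonempty ∧
    (B1 ∩ A2 ∩ B3).Nonempty ∧ A1 ∩ B2 ∩ B3 = ∅

/-- Output of the `Y`-rule applied with respect to the parts `A1|B1`, `A2|B2`, `A3|B3`. -/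
def yOut (A1 B1 A2 B2 A3 B3 : Set X) : Set (Sym2 (Set X)) :=
  {s(B1 ∪ (B2 ∩ B3), A1), s(A2 ∪ (A1 ∩ B3), B2), s(A3 ∪ (A1 ∩ B2), B3)}

/-- Condition of the `Z`-rule for the parts `A1|B1`, `A2|B2`. -/
def zCond (A1 B1 A2 B2 : Set X) : Prop :=
  (A1 ∩ A2).Nonempty ∧ (A2 ∩ B1).Nonempty ∧ (B1 ∩ B2).Nonempty ∧ A1 ∩ B2 = ∅

/-- Output of the `Z`-rule applied with respect to the parts `A1|B1`, `A2|B2`. -/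
def zOut (A1 B1 A2 B2 : Set X) : Set (Sym2 (Set X)) :=
  {s(B1 ∪ B2, A1), s(B2, A1 ∪ A2)}

/-- `Sig'` is obtained from `Sig` by a single application of the `Y`-rule. -/
def yStep (Sig Sig' : Set (Sym2 (Set X))) : Prop :=
  ∃ A1 B1 A2 B2 A3 B3 : Set X,
    s(A1, B1) ∈ Sig ∧ s(A2, B2) ∈ Sig ∧ s(A3, B3) ∈ Sig ∧
    s(A1, B1) ≠ s(A2, B2) ∧ s(A1, B1) ≠ s(A3, B3) ∧ s(A2, B2) ≠ s(A3, B3) ∧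
    yCond A1 B1 A2 B2 A3 B3 ∧
    Sig' = sreduce (Sig ∪ yOut A1 B1 A2 B2 A3 B3)

/-- `Sig'` is obtained from `Sig` by a single application of the `M`-rule. -/
def mStep (Sig Sig' : Set (Sym2 (Set X))) : Prop :=
  ∃ A1 B1 A2 B2 : Set X,
    s(A1, B1) ∈ Sig ∧ s(A2, B2) ∈ Sig ∧ s(A1, B1) ≠ s(A2, B2) ∧
    mCond A1 B1 A2 B2 ∧
    Sig' = sreduce (Sig ∪ mOut A1 B1 A2 B2)

/-- `Sig'` is obtained from `Sig` by a single non-trivial application of the `Y`-rule. -/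
def yStepNT (Sig Sig' : Set (Sym2 (Set X))) : Prop :=
  ∃ A1 B1 A2 B2 A3 B3 : Set X,
    s(A1, B1) ∈ Sig ∧ s(A2, B2) ∈ Sig ∧ s(A3, B3) ∈ Sig ∧
    s(A1, B1) ≠ s(A2, B2) ∧ s(A1, B1) ≠ s(A3, B3) ∧ s(A2, B2) ≠ s(A3, B3) ∧
    yCond A1 B1 A2 B2 A3 B3 ∧
    ¬ Preceq (sreduce (yOut A1 B1 A2 B2 A3 B3)) Sig ∧
    Sig' = sreduce (Sig ∪ yOut A1 B1 A2 B2 A3 B3)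

/-- `Sig'` is obtained from `Sig` by a single non-trivial application of the `M`-rule. -/
def mStepNT (Sig Sig' : Set (Sym2 (Set X))) : Prop :=
  ∃ A1 B1 A2 B2 : Set X,
    s(A1, B1) ∈ Sig ∧ s(A2, B2) ∈ Sig ∧ s(A1, B1) ≠ s(A2, B2) ∧
    mCond A1 B1 A2 B2 ∧
    ¬ Preceq (sreduce (mOut A1 B1 A2 B2)) Sig ∧
    Sig' = sreduce (Sig ∪ mOut A1 B1 A2 B2)

/-- `Sig` is closed under the `Y`-rule: every application of the `Y`-rule to `Sig` is trivial. -/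
def yClosed (Sig : Set (Sym2 (Set X))) : Prop :=
  ∀ A1 B1 A2 B2 A3 B3 : Set X,
    s(A1, B1) ∈ Sig → s(A2, B2) ∈ Sig → s(A3, B3) ∈ Sig →
    s(A1, B1) ≠ s(A2, B2) → s(A1, B1) ≠ s(A3, B3) → s(A2, B2) ≠ s(A3, B3) →
    yCond A1 B1 A2 B2 A3 B3 →
    Preceq (sreduce (yOut A1 B1 A2 B2 A3 B3)) Sig

/-- `Sig` is closed under the `M`-rule: every application of the `M`-rule to `Sig` is trivial. -/
def mClosed (Sig : Set (Sym2 (Set X))) : Prop :=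
  ∀ A1 B1 A2 B2 : Set X,
    s(A1, B1) ∈ Sig → s(A2, B2) ∈ Sig → s(A1, B1) ≠ s(A2, B2) →
    mCond A1 B1 A2 B2 →
    Preceq (sreduce (mOut A1 B1 A2 B2)) Sig

/-- A split closure sequence for `Sig` of length `n` with respect to the property `P` and
the non-trivial single-application relation `stepNT`: a strictly `⪯`-increasing sequence
in `P(X)` starting at `Sig` in which every term satisfying `P` is followed by the result
of one non-trivial application of the rule. -/
def IsClosureSeq (P : Set (Sym2 (Set X)) → Prop)
    (stepNT : Set (Sym2 (Set X)) → Set (Sym2 (Set X)) → Prop)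
    (Sig : Set (Sym2 (Set X))) (n : ℕ) (f : ℕ → Set (Sym2 (Set X))) : Prop :=
  f 0 = Sig ∧ (∀ i ≤ n, InPX (f i)) ∧
    (∀ i < n, P (f i) ∧ stepNT (f i) (f (i + 1)) ∧
      Preceq (f i) (f (i + 1)) ∧ f i ≠ f (i + 1))

/-- `cl` is a split closure of `Sig` (with `cl = none` playing the role of `ω`):
the last element of a split closure sequence for `Sig`, which either satisfies `P` and is
closed under the rule, or fails `P`, in which case it is replaced by `ω`. -/
def IsSplitClosure (P : Set (Sym2 (Set X)) → Prop)
    (stepNT : Set (Sym2 (Set X)) → Set (Sym2 (Set X)) → Prop)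
    (closed : Set (Sym2 (Set X)) → Prop)
    (Sig : Set (Sym2 (Set X))) (cl : Option (Set (Sym2 (Set X)))) : Prop :=
  ∃ (n : ℕ) (f : ℕ → Set (Sym2 (Set X))),
    IsClosureSeq P stepNT Sig n f ∧
    ((P (f n) ∧ closed (f n) ∧ cl = some (f n)) ∨ (¬ P (f n) ∧ cl = none))

/-- Split closure with respect to the `Y`-rule, `(P)` being weak compatibility. -/
def IsYClosure (Sig : Set (Sym2 (Set X))) (cl : Option (Set (Sym2 (Set X)))) : Prop :=
  IsSplitClosure WeaklyCompatible yStepNT yClosed Sig cl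

/-- Split closure with respect to the `M`-rule, `(P)` holding for all collections. -/
def IsMClosure (Sig : Set (Sym2 (Set X))) (cl : Option (Set (Sym2 (Set X)))) : Prop :=
  IsSplitClosure (fun _ => True) mStepNT mClosed Sig cl

/-- Split closure with respect to the combined `M/Y`-rule, `(P)` being weak compatibility. -/
def IsMYClosure (Sig : Set (Sym2 (Set X))) (cl : Option (Set (Sym2 (Set X)))) : Prop :=
  IsSplitClosure WeaklyCompatible
    (fun s s' => mStepNT s s' ∨ yStepNT s s') (fun s => mClosed s ∧ yClosed s) Sig cl

/-- `C` is an `X`-cycle: a connected graph on the vertex set `X` (`|X| ≥ 3`) in which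
every vertex has degree `2`. -/
def IsXCycle (C : SimpleGraph X) : Prop :=
  C.Connected ∧ 3 ≤ Nat.card X ∧ ∀ v : X, (C.neighborSet v).ncard = 2

/-- The partial split `S` is displayed by the `X`-cycle `C`: there are two distinct
edges of `C` whose deletion leaves one component containing one part of `S` and
another component containing the other part. -/
def DisplaysSplit (C : SimpleGraph X) (S : Sym2 (Set X)) : Prop :=
  ∃ A B : Set X, S = s(A, B) ∧
    ∃ e1 e2 : Sym2 X, e1 ∈ C.edgeSet ∧ e2 ∈ C.edgeSet ∧ e1 ≠ e2 ∧
      ∃ c1 c2 : (C.deleteEdges {e1, e2}).ConnectedComponent,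
        c1 ≠ c2 ∧ A ⊆ c1.supp ∧ B ⊆ c2.supp

/-- A collection of partial splits is displayed by `C` if each of its members is. -/
def DisplaysColl (C : SimpleGraph X) (Sig : Set (Sym2 (Set X))) : Prop :=
  ∀ S ∈ Sig, DisplaysSplit C S

/-- `cl ≠ ω` and the underlying collection is displayed by `C`. -/
def OptionDisplays (C : SimpleGraph X) (cl : Option (Set (Sym2 (Set X)))) : Prop :=
  ∃ Sig, cl = some Sig ∧ DisplaysColl C Sig

/-- The ground set `A ∪ B` of a partial split `A|B`. -/
def splitGround (S : Sym2 (Set X)) : Set X :=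
  ⋃₀ {A : Set X | A ∈ S}

/-- Membership in `P_ω(X) = P(X) ∪ {ω}`. -/
def InPOmega (x : Option (Set (Sym2 (Set X)))) : Prop :=
  x = none ∨ ∃ Sig, x = some Sig ∧ InPX Sig

/-- The order `⪯` on `P_ω(X)`, with `Sig ⪯ ω` for all `Sig` and `ω ⪯ ω`. -/
def PreceqO (x y : Option (Set (Sym2 (Set X)))) : Prop :=
  y = none ∨ ∃ Sig Sig', x = some Sig ∧ y = some Sig' ∧ Preceq Sig Sig'

/-- Split closure as a relation on `P_ω(X)`, with `⟨ω⟩ = ω`. -/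
def ClosO (cls : Set (Sym2 (Set X)) → Option (Set (Sym2 (Set X))) → Prop)
    (x y : Option (Set (Sym2 (Set X)))) : Prop :=
  (x = none ∧ y = none) ∨ ∃ Sig, x = some Sig ∧ cls Sig y

section Aux

variable {X : Type*}

lemma splitExtends_refl (S : Sym2 (Set X)) : SplitExtends S S := by
  induction S using Sym2.inductionOn with
  | hf A B => exact ⟨A, B, A, B, rfl, rfl, le_refl _, le_refl _⟩

lemma splitExtends_norm {T : Sym2 (Set X)} {A B : Set X}
    (h : SplitExtends T s(A, B)) : ∃ C D, T = s(C, D) ∧ A ⊆ C ∧ B ⊆ D := by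
  obtain ⟨C, D, A', B', hT, hS, h1, h2⟩ := h
  rw [Sym2.eq_iff] at hS
  rcases hS with ⟨rfl, rfl⟩ | ⟨rfl, rfl⟩
  · exact ⟨C, D, hT, h1, h2⟩
  · exact ⟨D, C, hT.trans (Sym2.eq_swap), h2, h1⟩

lemma splitExtends_trans {S T U : Sym2 (Set X)}
    (h1 : SplitExtends S T) (h2 : SplitExtends T U) : SplitExtends S U := by
  obtain ⟨C, D, E, F, hT, hU, hE, hF⟩ := h2
  subst hT
  obtain ⟨A, B, hS, hA, hB⟩ := splitExtends_norm h1
  exact ⟨A, B, E, F, hS, hU, hE.trans hA, hF.trans hB⟩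

lemma splitExtends_antisymm {S T : Sym2 (Set X)}
    (h1 : SplitExtends S T) (h2 : SplitExtends T S) : S = T := by
  induction T using Sym2.inductionOn with
  | hf C D =>
    obtain ⟨A, B, hS, hCA, hDB⟩ := splitExtends_norm h1
    subst hS
    obtain ⟨C', D', hT, hAC', hBD'⟩ := splitExtends_norm h2
    rw [Sym2.eq_iff] at hT
    rcases hT with ⟨rfl, rfl⟩ | ⟨rfl, rfl⟩
    · rw [subset_antisymm hCA hAC', subset_antisymm hDB hBD']
    · have hAC : A = C := subset_antisymm ((hAC'.trans hDB).trans hBD') hCA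
      have hBD : B = D := subset_antisymm ((hBD'.trans hCA).trans hAC') hDB
      rw [hAC, hBD]

lemma preceq_refl (Sig : Set (Sym2 (Set X))) : Preceq Sig Sig :=
  fun S hS => ⟨S, hS, splitExtends_refl S⟩

lemma preceq_trans {A B C : Set (Sym2 (Set X))}
    (h1 : Preceq A B) (h2 : Preceq B C) : Preceq A C := by
  intro S hS
  obtain ⟨T, hT, hTS⟩ := h1 S hS
  obtain ⟨U, hU, hUT⟩ := h2 T hT
  exact ⟨U, hU, splitExtends_trans hUT hTS⟩

/-- The map used to find maximal elements: `S ↦` the set of splits that `S` extends. -/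
lemma preceq_sreduce_of_finite {s : Set (Sym2 (Set X))} (hfin : s.Finite) :
    Preceq s (sreduce s) := by
  intro S hS
  have hfin' : {T ∈ s | SplitExtends T S}.Finite := hfin.subset (fun T hT => hT.1)
  obtain ⟨a, ha, hmax⟩ := Set.Finite.exists_maximalFor
    (fun T => {U : Sym2 (Set X) | SplitExtends T U}) _ hfin'
    ⟨S, hS, splitExtends_refl S⟩
  refine ⟨a, ⟨ha.1, ?_⟩, ha.2⟩
  rintro ⟨U, hU, hne, hUa⟩
  refine hne ?_
  have hUS : SplitExtends U S := splitExtends_trans hUa ha.2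
  have hsub : {V : Sym2 (Set X) | SplitExtends a V} ⊆ {V | SplitExtends U V} :=
    fun V hV => splitExtends_trans hUa hV
  have := hmax ⟨hU, hUS⟩ hsub
  have haU : SplitExtends a U := by
    have : U ∈ {V : Sym2 (Set X) | SplitExtends a V} := by
      exact this (splitExtends_refl U)
    exact this
  exact splitExtends_antisymm hUa haU

lemma preceq_antisymm {S1 S2 : Set (Sym2 (Set X))}
    (hr1 : sreduce S1 = S1) (hr2 : sreduce S2 = S2)
    (h12 : Preceq S1 S2) (h21 : Preceq S2 S1) : S1 = S2 := by
  have key : ∀ (A B : Set (Sym2 (Set X))), sreduce A = A →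
      Preceq A B → Preceq B A → A ⊆ B := by
    intro A B hrA hAB hBA S hS
    obtain ⟨T, hT, hTS⟩ := hAB S hS
    obtain ⟨U, hU, hUT⟩ := hBA T hT
    have hUS : SplitExtends U S := splitExtends_trans hUT hTS
    have hSr : S ∈ sreduce A := hrA.symm ▸ hS
    have hUSeq : U = S := by
      by_contra hne
      exact hSr.2 ⟨U, hU, hne, hUS⟩
    have hTS' : T = S :=
      splitExtends_antisymm hTS (hUSeq ▸ hUT)
    exact hTS' ▸ hT
  exact subset_antisymm (key _ _ hr1 h12 h21) (key _ _ hr2 h21 h12)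

lemma mOut_finite (A1 B1 A2 B2 : Set X) : (mOut A1 B1 A2 B2).Finite :=
  (Set.finite_singleton _).insert _ |>.insert _ |>.insert _

lemma disjoint_of_partialSplit {C D : Set X} (h : IsPartialSplit (s(C, D) : Sym2 (Set X))) :
    Disjoint C D := by
  obtain ⟨A, B, hAB, -, -, hd⟩ := h
  rw [Sym2.eq_iff] at hAB
  rcases hAB with ⟨rfl, rfl⟩ | ⟨rfl, rfl⟩
  · exact hd
  · exact hd.symm

/-- Key monotonicity lemma: an `M`-step from `Sig ⪯ Th` with `Th` `M`-closed
and consisting of partial splits remains `⪯ Th`. -/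
lemma mStep_preceq {Sig Sig' Th : Set (Sym2 (Set X))}
    (hTh : ∀ S ∈ Th, IsPartialSplit S) (hcl : mClosed Th)
    (hpre : Preceq Sig Th) (hstep : mStep Sig Sig') : Preceq Sig' Th := by
  obtain ⟨A1, B1, A2, B2, hm1, hm2, _, hcond, rfl⟩ := hstep
  intro S hS
  have hS' : S ∈ Sig ∪ mOut A1 B1 A2 B2 := hS.1
  rcases hS' with hS' | hS'
  · exact hpre S hS'
  · obtain ⟨C1, D1, hT1, hA1, hB1⟩ := splitExtends_norm
      (show SplitExtends _ s(A1, B1) from (hpre _ hm1).choose_spec.2)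
    have hT1mem : s(C1, D1) ∈ Th := hT1 ▸ (hpre _ hm1).choose_spec.1
    obtain ⟨C2, D2, hT2, hA2, hB2⟩ := splitExtends_norm
      (show SplitExtends _ s(A2, B2) from (hpre _ hm2).choose_spec.2)
    have hT2mem : s(C2, D2) ∈ Th := hT2 ▸ (hpre _ hm2).choose_spec.1
    -- the two new splits are each extended by some member of Th
    have hnew : ∀ U ∈ ({s(A1 ∩ A2, B1 ∪ B2), s(B1 ∩ B2, A1 ∪ A2)} :
        Set (Sym2 (Set X))), ∃ T ∈ Th, SplitExtends T U := by
      intro U hU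
      have hext1 : SplitExtends (s(C1 ∩ C2, D1 ∪ D2) : Sym2 (Set X)) s(A1 ∩ A2, B1 ∪ B2) :=
        ⟨_, _, _, _, rfl, rfl, Set.inter_subset_inter hA1 hA2, Set.union_subset_union hB1 hB2⟩
      have hext2 : SplitExtends (s(D1 ∩ D2, C1 ∪ C2) : Sym2 (Set X)) s(B1 ∩ B2, A1 ∪ A2) :=
        ⟨_, _, _, _, rfl, rfl, Set.inter_subset_inter hB1 hB2, Set.union_subset_union hA1 hA2⟩
      by_cases heq : (s(C1, D1) : Sym2 (Set X)) = s(C2, D2)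
      · -- both targets extended by s(C1, D1) itself
        rw [Sym2.eq_iff] at heq
        rcases heq with ⟨h1, h2⟩ | ⟨h1, h2⟩
        · subst h1; subst h2
          rcases hU with rfl | rfl
          · exact ⟨s(C1, D1), hT1mem, _, _, _, _, rfl, rfl,
              (Set.inter_subset_left.trans hA1), Set.union_subset hB1 hB2⟩
          · exact ⟨s(C1, D1), hT1mem, _, _, _, _, Sym2.eq_swap.symm, rfl,
              (Set.inter_subset_left.trans hB1), Set.union_subset hA1 hA2⟩
        · -- crossed: contradiction with disjointness
          exfalso
          have hdisj : Disjoint C1 D1 := disjoint_of_partialSplit (hTh _ hT1mem)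
          obtain ⟨x, hx1, hx2⟩ := hcond.1
          exact Set.disjoint_left.mp hdisj (hA1 hx1) (h2 ▸ hA2 hx2 : x ∈ D1)
      · -- apply closedness of Th
        have hcond' : mCond C1 D1 C2 D2 :=
          ⟨hcond.1.mono (Set.inter_subset_inter hA1 hA2),
           hcond.2.mono (Set.inter_subset_inter hB1 hB2)⟩
        have hpre' : Preceq (mOut C1 D1 C2 D2) Th :=
          preceq_trans (preceq_sreduce_of_finite (mOut_finite _ _ _ _))
            (hcl _ _ _ _ hT1mem hT2mem heq hcond')
        rcases hU with rfl | rfl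
        · obtain ⟨T, hT, hTe⟩ := hpre' s(C1 ∩ C2, D1 ∪ D2) (by
            simp [mOut, Set.mem_insert_iff])
          exact ⟨T, hT, splitExtends_trans hTe hext1⟩
        · obtain ⟨T, hT, hTe⟩ := hpre' s(D1 ∩ D2, C1 ∪ C2) (by
            simp [mOut, Set.mem_insert_iff])
          exact ⟨T, hT, splitExtends_trans hTe hext2⟩
    rcases hS' with rfl | hS'
    · exact hpre _ hm1
    rcases hS' with rfl | hS'
    · exact hpre _ hm2
    · exact hnew S hS'

/-- Along an `M`-closure sequence, every term precedes a fixed `M`-closed `Th`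
extending the start. -/
lemma closureSeq_preceq {Sig Th : Set (Sym2 (Set X))}
    (hTh : ∀ S ∈ Th, IsPartialSplit S) (hcl : mClosed Th)
    {n : ℕ} {f : ℕ → Set (Sym2 (Set X))}
    (hseq : IsClosureSeq (fun _ => True) mStepNT Sig n f)
    (h0 : Preceq Sig Th) : Preceq (f n) Th := by
  obtain ⟨hf0, _, hstep⟩ := hseq
  have : ∀ i ≤ n, Preceq (f i) Th := by
    intro i hi
    induction i with
    | zero => exact hf0 ▸ h0
    | succ j ih =>
      have hj : j < n := Nat.lt_of_succ_le hi
      obtain ⟨-, hNT, -, -⟩ := hstep j hj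
      obtain ⟨A1, B1, A2, B2, hm1, hm2, hne, hc, -, hout⟩ := hNT
      exact mStep_preceq hTh hcl (ih (le_of_lt hj))
        ⟨A1, B1, A2, B2, hm1, hm2, hne, hc, hout⟩
  exact this n le_rfl

lemma preceq_self_seq {Sig : Set (Sym2 (Set X))}
    {n : ℕ} {f : ℕ → Set (Sym2 (Set X))}
    (hseq : IsClosureSeq (fun _ => True) mStepNT Sig n f) : Preceq Sig (f n) := by
  obtain ⟨hf0, -, hstep⟩ := hseq
  have : ∀ i ≤ n, Preceq (f 0) (f i) := by
    intro i hi
    induction i with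
    | zero => exact preceq_refl _
    | succ j ih =>
      have hj : j < n := Nat.lt_of_succ_le hi
      exact preceq_trans (ih (le_of_lt hj)) (hstep j hj).2.2.1
  exact hf0 ▸ this n le_rfl

end Aux

/-- for `Σ ∈ P(X)`, any two split closures of `Σ` obtained solely via the
`M`-rule (with `(P)` holding for all collections) are equal. -/
theorem statement12 {X : Type*} [Fintype X] (Sig : Set (Sym2 (Set X)))
    (hPX : InPX Sig)
    (cl1 cl2 : Option (Set (Sym2 (Set X))))
    (h1 : IsMClosure Sig cl1) (h2 : IsMClosure Sig cl2) :
    cl1 = cl2 := by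
  obtain ⟨n1, f1, hseq1, hend1⟩ := h1
  obtain ⟨n2, f2, hseq2, hend2⟩ := h2
  rcases hend1 with ⟨-, hcl1, rfl⟩ | ⟨h, -⟩
  swap
  · exact absurd trivial h
  rcases hend2 with ⟨-, hcl2, rfl⟩ | ⟨h, -⟩
  swap
  · exact absurd trivial h
  have hPX1 : InPX (f1 n1) := hseq1.2.1 n1 le_rfl
  have hPX2 : InPX (f2 n2) := hseq2.2.1 n2 le_rfl
  have h12 : Preceq (f1 n1) (f2 n2) :=
    closureSeq_preceq hPX2.1 hcl2 hseq1 (preceq_self_seq hseq2)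
  have h21 : Preceq (f2 n2) (f1 n1) :=
    closureSeq_preceq hPX1.1 hcl1 hseq2 (preceq_self_seq hseq1)
  rw [preceq_antisymm hPX1.2 hPX2.2 h12 h21]
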